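/- (Mann) Let k ≥ 1, let a_1,...,a_k be nonzero integers, and let η_1,...,η_k be roots of unity with Σ_{i=1}^k a_i·η_i = 0. Then there exist a partition of {1,...,k} into nonempty blocks B_1,...,B_u, roots of unity ζ_1,...,ζ_u, and roots of unity ν_1,...,ν_k with the following properties: (i) η_i = ζ_j·ν_i for every j ∈ {1,...,u} and every i ∈ B_j; (ii) for every j, the sum Σ_{i ∈ B_j} a_i·ν_i = 0 is a minimal vanishing sum; (iii) every ν_i satisfies ν_i^n = 1 for some positive integer n that is a product of primes p, each satisfying p ≤ max_j |B_j|. -/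

import Mathlib

set_option maxHeartbeats 1600000

/-- A complex number is a root of unity. -/
def IsRootOfUnity (z : ℂ) : Prop := ∃ n : ℕ, 0 < n ∧ z ^ n = 1

section MannAux

open Polynomial IntermediateField Finset

lemma mann_pow_eq_pow_of_modEq {ω : ℂ} {n : ℕ} (h : ω ^ n = 1) {x y : ℕ} (hxy : x ≡ y [MOD n]) :
    ω ^ x = ω ^ y := by
  have key : ∀ z : ℕ, ω ^ z = ω ^ (z % n) := by
    intro z
    conv_lhs => rw [← Nat.mod_add_div z n]
    rw [pow_add, pow_mul, h, one_pow, mul_one]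
  rw [key x, key y, hxy]

lemma zpow_eq_pow_mod {ω : ℂ} {M : ℕ} (hM : 0 < M) (h : ω ^ M = 1) (hω : ω ≠ 0) (z : ℤ) :
    ω ^ z = ω ^ ((z % (M : ℤ)).toNat) := by
  have hMz : ω ^ (M : ℤ) = 1 := by rw [zpow_natCast, h]
  conv_lhs => rw [← Int.emod_add_mul_ediv z M]
  rw [zpow_add₀ hω, zpow_mul, hMz, one_zpow, mul_one,
    ← zpow_natCast, Int.toNat_of_nonneg (Int.emod_nonneg z (by positivity))]

lemma mann_indep {p a m : ℕ} (hp : p.Prime) (ha : 0 < a) (hm : 0 < m)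
    (hcop : Nat.Coprime p m) {ω ξ : ℂ}
    (hω : IsPrimitiveRoot ω (p ^ a)) (hξ : IsPrimitiveRoot ξ m)
    (g : ℕ → ℂ) (hg : ∀ j, g j ∈ IntermediateField.adjoin ℚ ({ξ} : Set ℂ))
    (h0 : ∑ j ∈ Finset.range (p ^ (a - 1) * (p - 1)), g j * ω ^ j = 0) :
    ∀ j < p ^ (a - 1) * (p - 1), g j = 0 := by
  set D := p ^ (a - 1) * (p - 1) with hD
  have hpa : 0 < p ^ a := pow_pos hp.pos a
  have hcop' : Nat.Coprime (p ^ a) m := Nat.Coprime.pow_left a hcop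
  -- the product is a primitive (p^a * m)-th root of unity
  have hζ : IsPrimitiveRoot (ω * ξ) (p ^ a * m) := by
    have h1 : orderOf ω = p ^ a := (IsPrimitiveRoot.eq_orderOf hω).symm
    have h2 : orderOf ξ = m := (IsPrimitiveRoot.eq_orderOf hξ).symm
    have h3 : orderOf (ω * ξ) = p ^ a * m := by
      rw [(Commute.all ω ξ).orderOf_mul_eq_mul_orderOf_of_coprime (by rw [h1, h2]; exact hcop'),
        h1, h2]
    have := IsPrimitiveRoot.orderOf (ω * ξ)
    rwa [h3] at this
  have hωint : IsIntegral ℚ ω := (hω.isIntegral hpa).tower_top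
  have hξint : IsIntegral ℚ ξ := (hξ.isIntegral hm).tower_top
  have hζint : IsIntegral ℚ (ω * ξ) := (hζ.isIntegral (Nat.mul_pos hpa hm)).tower_top
  set F : IntermediateField ℚ ℂ := ℚ⟮ξ⟯ with hF
  have hωF : IsIntegral F ω := IsIntegral.tower_top hωint
  haveI : FiniteDimensional ℚ F := IntermediateField.adjoin.finiteDimensional hξint
  set E : IntermediateField F ℂ := F⟮ω⟯ with hE
  haveI : FiniteDimensional F E := IntermediateField.adjoin.finiteDimensional hωF
  haveI : FiniteDimensional ℚ E := Module.Finite.trans F E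
  -- degree computations
  have hfF : Module.finrank ℚ F = m.totient := by
    rw [IntermediateField.adjoin.finrank hξint, ← Polynomial.cyclotomic_eq_minpoly_rat hξ hm,
      natDegree_cyclotomic]
  have hfζ : Module.finrank ℚ ℚ⟮ω * ξ⟯ = (p ^ a * m).totient := by
    rw [IntermediateField.adjoin.finrank hζint,
      ← Polynomial.cyclotomic_eq_minpoly_rat hζ (Nat.mul_pos hpa hm), natDegree_cyclotomic]
  have hle : ℚ⟮ω * ξ⟯ ≤ E.restrictScalars ℚ := by
    rw [IntermediateField.adjoin_le_iff]
    intro x hx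
    rw [Set.mem_singleton_iff] at hx
    subst hx
    have h1 : ω ∈ E := IntermediateField.mem_adjoin_simple_self F ω
    have h2 : ξ ∈ E := by
      have : ξ ∈ F := IntermediateField.mem_adjoin_simple_self ℚ ξ
      exact E.algebraMap_mem ⟨ξ, this⟩
    exact mul_mem h1 h2
  haveI : FiniteDimensional ℚ (E.restrictScalars ℚ) := ‹FiniteDimensional ℚ E›
  haveI : Module.Finite ℚ ↥(Subalgebra.toSubmodule (E.restrictScalars ℚ).toSubalgebra) :=
    ‹FiniteDimensional ℚ (E.restrictScalars ℚ)›
  have hmono : Module.finrank ℚ ℚ⟮ω * ξ⟯ ≤ Module.finrank ℚ (E.restrictScalars ℚ) := by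
    have h := Submodule.finrank_mono
      (s := Subalgebra.toSubmodule (ℚ⟮ω * ξ⟯.toSubalgebra))
      (t := Subalgebra.toSubmodule ((E.restrictScalars ℚ).toSubalgebra))
      (fun x hx => hle hx)
    exact h
  have htower : Module.finrank ℚ (E.restrictScalars ℚ) =
      Module.finrank ℚ F * Module.finrank F E := (Module.finrank_mul_finrank ℚ F E).symm
  have htot : (p ^ a * m).totient = (p ^ a).totient * m.totient :=
    Nat.totient_mul hcop'
  have hDle : D ≤ Module.finrank F E := by
    have h1 : (p ^ a).totient * m.totient ≤ Module.finrank ℚ F * Module.finrank F E := by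
      rw [← htot, ← hfζ, ← htower]; exact hmono
    rw [hfF] at h1
    have hmt : 0 < m.totient := Nat.totient_pos.mpr hm
    rw [mul_comm ((p^a).totient) m.totient] at h1
    have : (p ^ a).totient ≤ Module.finrank F E := Nat.le_of_mul_le_mul_left h1 hmt
    rwa [Nat.totient_prime_pow hp ha] at this
  have hdeg : D ≤ (minpoly F ω).natDegree := by
    rwa [IntermediateField.adjoin.finrank hωF] at hDle
  -- now the polynomial argument
  intro j hj
  by_contra hgj
  set c : ℕ → F := fun j => if h : g j = 0 then 0 else ⟨g j, hg j⟩ with hc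
  set P : Polynomial F := ∑ i ∈ Finset.range D, Polynomial.monomial i (c i) with hP
  have hcoeff : ∀ i, P.coeff i = if i ∈ Finset.range D then c i else 0 := by
    intro i
    rw [hP, Polynomial.finset_sum_coeff]
    simp only [Polynomial.coeff_monomial]
    rw [Finset.sum_ite_eq' (Finset.range D) i c]
  have hPne : P ≠ 0 := by
    intro h
    have := hcoeff j
    rw [h, Polynomial.coeff_zero, if_pos (Finset.mem_range.mpr hj)] at this
    rw [hc] at this
    simp only [hgj, dif_neg, not_false_iff] at this
    exact hgj (by simpa using congrArg (Subtype.val) this.symm)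
  have haev : Polynomial.aeval ω P = 0 := by
    rw [hP, map_sum]
    have : ∀ i ∈ Finset.range D, Polynomial.aeval ω (Polynomial.monomial i (c i)) = g i * ω ^ i := by
      intro i _
      rw [Polynomial.aeval_monomial]
      congr 1
      rw [hc]
      by_cases h : g i = 0
      · simp [h]
      · simp only [h, dif_neg, not_false_iff]
        rfl
    rw [Finset.sum_congr rfl this, h0]
  have hdegP : P.degree < (D : ℕ) := by
    rw [hP]
    apply lt_of_le_of_lt (Polynomial.degree_sum_le _ _)
    rw [Finset.sup_lt_iff (by exact_mod_cast WithBot.bot_lt_coe D)]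
    intro i hi
    exact lt_of_le_of_lt (Polynomial.degree_monomial_le i (c i))
      (by exact_mod_cast Finset.mem_range.mp hi)
  have h1 : (minpoly F ω).degree ≤ P.degree := minpoly.degree_le_of_ne_zero F ω hPne haev
  have h2 : ((D : ℕ) : WithBot ℕ) ≤ (minpoly F ω).degree := by
    rw [Polynomial.degree_eq_natDegree (minpoly.ne_zero hωF)]
    exact_mod_cast hdeg
  exact absurd (lt_of_lt_of_le (lt_of_le_of_lt h1 hdegP) h2) (lt_irrefl _)

lemma mann_core (k : ℕ) (a : Fin k → ℤ) (B : Finset (Fin k)) (n : ℕ) : 0 < n → ∀ ν : Fin k → ℂ,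
    (∀ i ∈ B, ν i ^ n = 1) →
    (∑ i ∈ B, (a i : ℂ) * ν i = 0) →
    (∀ S ⊆ B, S.Nonempty → S ≠ B → ∑ i ∈ S, (a i : ℂ) * ν i ≠ 0) →
    ∃ ζ : ℂ, ζ ^ n = 1 ∧ ∀ i ∈ B, ∃ N : ℕ, 0 < N ∧ (ν i * ζ⁻¹) ^ N = 1 ∧
      ∀ q : ℕ, q.Prime → q ∣ N → q ≤ B.card := by
  induction n using Nat.strong_induction_on with
  | _ n IH =>
  intro hn ν hexp hsum hmin
  haveI : NeZero n := ⟨hn.ne'⟩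
  by_cases hB : B.Nonempty
  swap
  · exact ⟨1, one_pow n, fun i hi => absurd ⟨i, hi⟩ hB⟩
  by_cases hsmooth : ∀ q : ℕ, q.Prime → q ∣ n → q ≤ B.card
  · exact ⟨1, one_pow n, fun i hi => ⟨n, hn, by rw [inv_one, mul_one]; exact hexp i hi, hsmooth⟩⟩
  push_neg at hsmooth
  obtain ⟨p, hp, hpn, hpB⟩ := hsmooth
  -- decompose n = p ^ A * m
  set A := n.factorization p with hA
  have hA1 : 1 ≤ A := (hp.factorization_pos_of_dvd hn.ne' hpn)
  set m := n / p ^ A with hm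
  have hnm : p ^ A * m = n := Nat.ordProj_mul_ordCompl_eq_self n p
  have hcop : Nat.Coprime p m := Nat.coprime_ordCompl hp hn.ne'
  have hcop' : Nat.Coprime (p ^ A) m := Nat.Coprime.pow_left A hcop
  have hmpos : 0 < m := Nat.ordCompl_pos p hn.ne'
  have hpa : 0 < p ^ A := pow_pos hp.pos A
  have hpa1 : 1 < p ^ A := Nat.one_lt_pow (by omega) hp.one_lt
  -- primitive roots
  set ζn : ℂ := Complex.exp (2 * Real.pi * Complex.I / n) with hζn
  have hζnprim : IsPrimitiveRoot ζn n := Complex.isPrimitiveRoot_exp n hn.ne'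
  set ω : ℂ := ζn ^ m with hω
  set ξ : ℂ := ζn ^ (p ^ A) with hξ
  have hωprim : IsPrimitiveRoot ω (p ^ A) :=
    IsPrimitiveRoot.pow hn hζnprim (by rw [mul_comm]; exact hnm.symm)
  have hξprim : IsPrimitiveRoot ξ m := IsPrimitiveRoot.pow hn hζnprim hnm.symm
  have hζnne : ζn ≠ 0 := hζnprim.ne_zero hn.ne'
  have hωne : ω ≠ 0 := hωprim.ne_zero hpa.ne'
  have hξne : ξ ≠ 0 := hξprim.ne_zero hmpos.ne'
  have hωpow : ω ^ (p ^ A) = 1 := hωprim.pow_eq_one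
  have hξpow : ξ ^ m = 1 := hξprim.pow_eq_one
  -- Bezout
  have hbez : ∃ α β : ℤ, α * ((p ^ A : ℕ) : ℤ) + β * ((m : ℕ) : ℤ) = 1 := by
    have h1 : IsCoprime ((p ^ A : ℕ) : ℤ) ((m : ℕ) : ℤ) := by
      rw [Int.isCoprime_iff_gcd_eq_one, Int.gcd_natCast_natCast]
      exact hcop'
    exact h1
  obtain ⟨α, β, hαβ⟩ := hbez
  -- decomposition of each ν i
  have hdec : ∀ i : Fin k, ∃ (C : ℕ) (d : ℤ), i ∈ B → (C < p ^ A ∧ ν i = ω ^ C * ξ ^ d) := by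
    intro i
    by_cases hi : i ∈ B
    · obtain ⟨e, -, he⟩ := hζnprim.eq_pow_of_pow_eq_one (hexp i hi)
      have h1 : ν i = ξ ^ ((α * e : ℤ)) * ω ^ ((β * e : ℤ)) := by
        calc ν i = ζn ^ ((e : ℤ)) := by rw [zpow_natCast, he]
          _ = ζn ^ ((e : ℤ) * (α * ((p ^ A : ℕ) : ℤ) + β * ((m : ℕ) : ℤ))) := by
              rw [hαβ, mul_one]
          _ = ζn ^ (((p ^ A : ℕ) : ℤ) * (α * e)) * ζn ^ (((m : ℕ) : ℤ) * (β * e)) := by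
              rw [← zpow_add₀ hζnne]; congr 1; ring
          _ = (ζn ^ (((p ^ A : ℕ) : ℤ))) ^ (α * e) * (ζn ^ (((m : ℕ) : ℤ))) ^ (β * e) := by
              rw [zpow_mul ζn (((p ^ A : ℕ) : ℤ)) (α * e), zpow_mul ζn (((m : ℕ) : ℤ)) (β * e)]
          _ = ξ ^ ((α * e : ℤ)) * ω ^ ((β * e : ℤ)) := by
              rw [zpow_natCast, zpow_natCast, hξ, hω]
      refine ⟨((β * e) % ((p ^ A : ℕ) : ℤ)).toNat, α * e, fun _ => ⟨?_, ?_⟩⟩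
      · have h2 : (β * e) % ((p ^ A : ℕ) : ℤ) < ((p ^ A : ℕ) : ℤ) :=
          Int.emod_lt_of_pos _ (by exact_mod_cast hpa)
        omega
      · rw [h1, ← zpow_eq_pow_mod hpa hωpow hωne (β * e), mul_comm]
    · exact ⟨0, 0, fun h => absurd h hi⟩
  choose C d hCd using hdec
  set q : Fin k → ℕ := fun i => C i / p ^ (A - 1) with hq
  have hplarge : B.card < p := hpB
  haveI : NeZero p := ⟨hp.pos.ne'⟩
  -- pick a good shift
  obtain ⟨s, hs⟩ : ∃ s : ZMod p, s ∉ B.image (fun i => ((q i + 1 : ℕ) : ZMod p)) := by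
    by_contra h
    push_neg at h
    have h1 : (Finset.univ : Finset (ZMod p)) ⊆ B.image _ := fun x _ => h x
    have h2 := Finset.card_le_card h1
    rw [Finset.card_univ, ZMod.card] at h2
    exact absurd (lt_of_le_of_lt (le_trans h2 (Finset.card_image_le)) hplarge) (lt_irrefl p)
  set S : ℕ := s.val with hSdef
  have hSp : S < p := ZMod.val_lt s
  have hgood : ∀ i ∈ B, (q i + 1) % p ≠ S := by
    intro i hi hcon
    apply hs
    refine Finset.mem_image.mpr ⟨i, hi, ?_⟩
    have : ((q i + 1 : ℕ) : ZMod p) = (((q i + 1) % p : ℕ) : ZMod p) := by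
      rw [ZMod.natCast_mod]
    rw [this, hcon, hSdef, ZMod.natCast_val, ZMod.cast_id]
  -- the reduced exponents
  set D := p ^ (A - 1) * (p - 1) with hD
  set E : Fin k → ℕ := fun i => (C i % p ^ (A - 1)) + p ^ (A - 1) * ((q i + p - S) % p) with hE
  have hpa' : 0 < p ^ (A - 1) := pow_pos hp.pos _
  have hpsplit : p ^ (A - 1) * p = p ^ A := by
    rw [← pow_succ]
    congr 1
    omega
  have hqlt : ∀ i ∈ B, q i < p := by
    intro i hi
    show C i / p ^ (A - 1) < p
    refine (Nat.div_lt_iff_lt_mul hpa').mpr ?_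
    rw [mul_comm, hpsplit]
    exact (hCd i hi).1
  have hp2 : 2 ≤ p := hp.two_le
  have hmodE : ∀ i ∈ B, C i ≡ E i + p ^ (A - 1) * S [MOD p ^ A] := by
    intro i hi
    have hsplit : C i = C i % p ^ (A - 1) + p ^ (A - 1) * q i := by
      conv_lhs => rw [← Nat.mod_add_div (C i) (p ^ (A - 1))]
    rw [hsplit]
    show _ ≡ (C i % p ^ (A - 1) + p ^ (A - 1) * ((q i + p - S) % p)) + p ^ (A - 1) * S [MOD p ^ A]
    rw [add_assoc, ← Nat.mul_add]
    apply Nat.ModEq.add_left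
    rw [← hpsplit]
    apply Nat.ModEq.mul_left'
    apply Nat.ModEq.symm
    calc (q i + p - S) % p + S ≡ (q i + p - S) + S [MOD p] :=
          Nat.ModEq.add_right S (Nat.mod_modEq _ p)
      _ = q i + p := by omega
      _ ≡ q i [MOD p] := by
          show (q i + p) % p = q i % p
          exact Nat.add_mod_right _ _
  have hElt : ∀ i ∈ B, E i < D := by
    intro i hi
    have h1 : (q i + p - S) % p < p := Nat.mod_lt _ hp.pos
    have h2 : (q i + p - S) % p ≠ p - 1 := by
      intro hcon
      apply hgood i hi
      calc (q i + 1) % p = ((q i + 1) + p) % p := (Nat.add_mod_right _ _).symm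
        _ = ((q i + p - S) + (S + 1)) % p := by congr 1; omega
        _ = ((q i + p - S) % p + (S + 1)) % p := by rw [Nat.mod_add_mod]
        _ = (p - 1 + (S + 1)) % p := by rw [hcon]
        _ = (S + p) % p := by congr 1; omega
        _ = S % p := Nat.add_mod_right _ _
        _ = S := Nat.mod_eq_of_lt hSp
    have h3 : (q i + p - S) % p ≤ p - 2 := by
      revert h1 h2
      generalize (q i + p - S) % p = x
      intro h1 h2
      omega
    have h4 : C i % p ^ (A - 1) < p ^ (A - 1) := Nat.mod_lt _ hpa'
    show C i % p ^ (A - 1) + p ^ (A - 1) * ((q i + p - S) % p) < p ^ (A - 1) * (p - 1)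
    have h5 : p ^ (A - 1) * ((q i + p - S) % p) ≤ p ^ (A - 1) * (p - 2) :=
      Nat.mul_le_mul_left _ h3
    have h6 : p ^ (A - 1) + p ^ (A - 1) * (p - 2) = p ^ (A - 1) * (p - 1) := by
      have h7 : p - 1 = 1 + (p - 2) := by omega
      rw [h7, Nat.mul_add, Nat.mul_one]
    omega
  have hνE : ∀ i ∈ B, ν i = ω ^ (E i) * ω ^ (p ^ (A - 1) * S) * ξ ^ (d i) := by
    intro i hi
    rw [(hCd i hi).2, mann_pow_eq_pow_of_modEq hωpow (hmodE i hi), pow_add]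
  -- group sums vanish
  set g : ℕ → ℂ := fun j => ∑ i ∈ B.filter (fun i => E i = j), (a i : ℂ) * ξ ^ (d i) with hg
  have hgmem : ∀ j, g j ∈ IntermediateField.adjoin ℚ ({ξ} : Set ℂ) := by
    intro j
    apply sum_mem
    intro i _
    exact mul_mem (IntermediateField.intCast_mem _ _)
      (zpow_mem (IntermediateField.mem_adjoin_simple_self ℚ ξ) (d i))
  have hsum0 : ∑ j ∈ Finset.range D, g j * ω ^ j = 0 := by
    have h1 : ∑ j ∈ Finset.range D, g j * ω ^ j
        = ∑ i ∈ B, (a i : ℂ) * ξ ^ (d i) * ω ^ (E i) := by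
      rw [← Finset.sum_fiberwise_of_maps_to (fun i hi => Finset.mem_range.mpr (hElt i hi))
        (fun i => (a i : ℂ) * ξ ^ (d i) * ω ^ (E i))]
      apply Finset.sum_congr rfl
      intro j _
      rw [hg]
      simp only
      rw [Finset.sum_mul]
      apply Finset.sum_congr rfl
      intro i hi
      rw [(Finset.mem_filter.mp hi).2]
    rw [h1]
    have h2 : ∀ i ∈ B, (a i : ℂ) * ξ ^ (d i) * ω ^ (E i)
        = ((a i : ℂ) * ν i) * (ω ^ (p ^ (A - 1) * S))⁻¹ := by
      intro i hi
      rw [hνE i hi]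
      field_simp
    rw [Finset.sum_congr rfl h2, ← Finset.sum_mul, hsum, zero_mul]
  have hgzero := mann_indep hp (by omega) hmpos hcop hωprim hξprim g hgmem hsum0
  -- each fiber's ν-sum vanishes
  have hfiber : ∀ j < D, ∑ i ∈ B.filter (fun i => E i = j), (a i : ℂ) * ν i = 0 := by
    intro j hj
    have h1 : ∀ i ∈ B.filter (fun i => E i = j),
        (a i : ℂ) * ν i = ((a i : ℂ) * ξ ^ (d i)) * (ω ^ j * ω ^ (p ^ (A - 1) * S)) := by
      intro i hi
      obtain ⟨hiB, hiE⟩ := Finset.mem_filter.mp hi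
      rw [hνE i hiB, hiE]
      ring
    rw [Finset.sum_congr rfl h1, ← Finset.sum_mul]
    have hgj : (∑ i ∈ B.filter (fun i => E i = j), (a i : ℂ) * ξ ^ (d i)) = g j := rfl
    rw [hgj, hgzero j hj, zero_mul]
  -- minimality forces a single fiber
  obtain ⟨i0, hi0⟩ := hB
  have hj0D : E i0 < D := hElt i0 hi0
  have hfib_eq : B.filter (fun i => E i = E i0) = B := by
    by_contra hne
    exact hmin (B.filter (fun i => E i = E i0)) (Finset.filter_subset _ _)
      ⟨i0, Finset.mem_filter.mpr ⟨hi0, rfl⟩⟩ hne (hfiber (E i0) hj0D)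
  have hallE : ∀ i ∈ B, E i = E i0 := by
    intro i hi
    rw [← hfib_eq] at hi
    exact (Finset.mem_filter.mp hi).2
  set ζ0 : ℂ := ω ^ (E i0 + p ^ (A - 1) * S) with hζ0
  have hζ0ne : ζ0 ≠ 0 := pow_ne_zero _ hωne
  have hν0 : ∀ i ∈ B, ν i = ζ0 * ξ ^ (d i) := by
    intro i hi
    have hsplit0 : ω ^ (E i0 + p ^ (A - 1) * S) = ω ^ (E i0) * ω ^ (p ^ (A - 1) * S) :=
      pow_add ω _ _
    rw [hνE i hi, hallE i hi, hζ0, hsplit0]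
  -- apply the induction hypothesis at m
  set μ : Fin k → ℂ := fun i => ν i * ζ0⁻¹ with hμ
  have hμξ : ∀ i ∈ B, μ i = ξ ^ (d i) := by
    intro i hi
    rw [hμ]
    simp only
    rw [hν0 i hi, mul_comm ζ0, mul_assoc, mul_inv_cancel₀ hζ0ne, mul_one]
  have hmn : m < n := by
    rw [← hnm]
    calc m = 1 * m := (one_mul m).symm
      _ < p ^ A * m := (Nat.mul_lt_mul_right hmpos).mpr hpa1
  obtain ⟨ζ1, hζ1m, hζ1spec⟩ := IH m hmn hmpos μ
    (by
      intro i hi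
      rw [hμξ i hi, ← zpow_natCast, ← zpow_mul, mul_comm, zpow_mul, zpow_natCast, hξpow, one_zpow])
    (by
      have : ∀ i ∈ B, (a i : ℂ) * μ i = ((a i : ℂ) * ν i) * ζ0⁻¹ := by
        intro i _; rw [hμ]; ring
      rw [Finset.sum_congr rfl this, ← Finset.sum_mul, hsum, zero_mul])
    (by
      intro S' hS' hS'ne hS'neq hcon
      apply hmin S' hS' hS'ne hS'neq
      have : ∀ i ∈ S', (a i : ℂ) * μ i = ((a i : ℂ) * ν i) * ζ0⁻¹ := by
        intro i _; rw [hμ]; ring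
      rw [Finset.sum_congr rfl this, ← Finset.sum_mul] at hcon
      exact (mul_eq_zero.mp hcon).resolve_right (inv_ne_zero hζ0ne))
  refine ⟨ζ0 * ζ1, ?_, ?_⟩
  · rw [mul_pow]
    have h1 : ζ0 ^ n = 1 := by
      rw [hζ0, ← pow_mul, ← hnm]
      rw [show (E i0 + p ^ (A - 1) * S) * (p ^ A * m)
        = p ^ A * ((E i0 + p ^ (A - 1) * S) * m) by ring]
      rw [pow_mul, hωpow, one_pow]
    have h2 : ζ1 ^ n = 1 := by
      rw [← hnm, mul_comm, pow_mul, hζ1m, one_pow]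
    rw [h1, h2, one_mul]
  · intro i hi
    obtain ⟨N, hN, hNpow, hNprime⟩ := hζ1spec i hi
    refine ⟨N, hN, ?_, hNprime⟩
    rw [mul_inv, ← mul_assoc]
    exact hNpow

lemma mann_partition (k : ℕ) (a : Fin k → ℤ) (η : Fin k → ℂ) :
    ∀ (S : Finset (Fin k)), (∑ i ∈ S, (a i : ℂ) * η i = 0) →
    ∃ L : List (Finset (Fin k)),
      (∀ T ∈ L, T.Nonempty ∧ T ⊆ S ∧ (∑ i ∈ T, (a i : ℂ) * η i = 0) ∧
        (∀ S' ⊆ T, S'.Nonempty → S' ≠ T → ∑ i ∈ S', (a i : ℂ) * η i ≠ 0)) ∧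
      List.Pairwise Disjoint L ∧ (∀ x ∈ S, ∃ T ∈ L, x ∈ T) := by
  intro S
  induction S using Finset.strongInduction with
  | _ S IHS =>
  intro hsum
  classical
  by_cases hS : S.Nonempty
  swap
  · refine ⟨[], by simp, by simp, ?_⟩
    intro x hx
    exact absurd ⟨x, hx⟩ hS
  -- pick a minimal vanishing nonempty subset
  set cand := S.powerset.filter (fun T => T.Nonempty ∧ ∑ i ∈ T, (a i : ℂ) * η i = 0) with hcand
  have hScand : S ∈ cand := by
    rw [hcand]
    exact Finset.mem_filter.mpr ⟨Finset.mem_powerset_self S, hS, hsum⟩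
  obtain ⟨T, hTcand, hTmin⟩ := Finset.exists_min_image cand Finset.card ⟨S, hScand⟩
  rw [hcand, Finset.mem_filter, Finset.mem_powerset] at hTcand
  obtain ⟨hTS, hTne, hTsum⟩ := hTcand
  have hTminimal : ∀ S' ⊆ T, S'.Nonempty → S' ≠ T → ∑ i ∈ S', (a i : ℂ) * η i ≠ 0 := by
    intro S' hS'T hS'ne hS'neq hS'sum
    have hS'cand : S' ∈ cand := by
      rw [hcand]
      exact Finset.mem_filter.mpr ⟨Finset.mem_powerset.mpr (hS'T.trans hTS), hS'ne, hS'sum⟩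
    have h1 := hTmin S' hS'cand
    have h2 : S'.card < T.card := Finset.card_lt_card (lt_of_le_of_ne hS'T hS'neq)
    omega
  -- recurse on the rest
  have hrest : ∑ i ∈ S \ T, (a i : ℂ) * η i = 0 := by
    have h1 := Finset.sum_sdiff (f := fun i => (a i : ℂ) * η i) hTS
    rw [hsum, hTsum, add_zero] at h1
    exact h1
  have hss : S \ T ⊂ S := Finset.sdiff_ssubset hTS hTne
  obtain ⟨L', hL'mem, hL'pw, hL'cov⟩ := IHS (S \ T) hss hrest
  refine ⟨T :: L', ?_, ?_, ?_⟩
  · intro T' hT'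
    rcases List.mem_cons.mp hT' with h | h
    · subst h
      exact ⟨hTne, hTS, hTsum, hTminimal⟩
    · obtain ⟨h1, h2, h3, h4⟩ := hL'mem T' h
      exact ⟨h1, h2.trans (Finset.sdiff_subset), h3, h4⟩
  · refine List.pairwise_cons.mpr ⟨?_, hL'pw⟩
    intro T' hT'
    have h2 : T' ⊆ S \ T := (hL'mem T' hT').2.1
    exact Finset.disjoint_of_subset_right h2 Finset.disjoint_sdiff
  · intro x hx
    by_cases hxT : x ∈ T
    · exact ⟨T, List.mem_cons_self, hxT⟩
    · obtain ⟨T', hT', hxT'⟩ := hL'cov x (Finset.mem_sdiff.mpr ⟨hx, hxT⟩)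
      exact ⟨T', List.mem_cons_of_mem _ hT', hxT'⟩

end MannAux

/-- **Mann's theorem** on vanishing sums of roots of unity: every vanishing sum
`∑ aᵢ ηᵢ = 0` with nonzero integer coefficients decomposes, along a partition of the
index set into nonempty blocks, into rotated minimal vanishing sums `ζⱼ ∑_{i ∈ Bⱼ} aᵢ νᵢ`,
where the orders of the roots of unity `νᵢ` only involve primes `p ≤ max_j |Bⱼ|`. -/
theorem mann_vanishing_sum (k : ℕ) (hk : 1 ≤ k) (a : Fin k → ℤ) (ha : ∀ i, a i ≠ 0)
    (η : Fin k → ℂ) (hη : ∀ i, IsRootOfUnity (η i))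
    (hsum : ∑ i : Fin k, (a i : ℂ) * η i = 0) :
    ∃ (u : ℕ) (B : Fin u → Finset (Fin k)) (ζ : Fin u → ℂ) (ν : Fin k → ℂ),
      (∀ j, (B j).Nonempty) ∧
      (∀ j j', j ≠ j' → Disjoint (B j) (B j')) ∧
      (Finset.univ.biUnion B = Finset.univ) ∧
      (∀ j, IsRootOfUnity (ζ j)) ∧
      (∀ i, IsRootOfUnity (ν i)) ∧
      (∀ j, ∀ i ∈ B j, η i = ζ j * ν i) ∧
      (∀ j, ∑ i ∈ B j, (a i : ℂ) * ν i = 0) ∧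
      (∀ j, ∀ S ⊆ B j, S.Nonempty → S ≠ B j → ∑ i ∈ S, (a i : ℂ) * ν i ≠ 0) ∧
      (∀ i, ∃ n : ℕ, 0 < n ∧ ν i ^ n = 1 ∧
        ∀ p : ℕ, p.Prime → p ∣ n → ∃ j, p ≤ (B j).card) := by
  classical
  obtain ⟨L, hLmem, hLpw, hLcov⟩ := mann_partition k a η Finset.univ hsum
  set u := L.length with hu
  set B : Fin u → Finset (Fin k) := fun j => L.get j with hB
  have hBmem : ∀ j : Fin u, B j ∈ L := fun j => L.get_mem j
  have hBne : ∀ j, (B j).Nonempty := fun j => (hLmem _ (hBmem j)).1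
  have hBsum : ∀ j, ∑ i ∈ B j, (a i : ℂ) * η i = 0 := fun j => (hLmem _ (hBmem j)).2.2.1
  have hBmin : ∀ j, ∀ S' ⊆ B j, S'.Nonempty → S' ≠ B j → ∑ i ∈ S', (a i : ℂ) * η i ≠ 0 :=
    fun j => (hLmem _ (hBmem j)).2.2.2
  have hdisj : ∀ j j', j ≠ j' → Disjoint (B j) (B j') := by
    intro j j' hjj'
    have hpw := List.pairwise_iff_get.mp hLpw
    rcases lt_or_gt_of_ne hjj' with h | h
    · exact hpw j j' h
    · exact (hpw j' j h).symm
  have hcov : ∀ i : Fin k, ∃ j : Fin u, i ∈ B j := by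
    intro i
    obtain ⟨T, hTL, hiT⟩ := hLcov i (Finset.mem_univ i)
    obtain ⟨j, hj⟩ := List.mem_iff_get.mp hTL
    refine ⟨j, ?_⟩
    show i ∈ L.get j
    rw [hj]
    exact hiT
  have hexp : ∀ j : Fin u, ∃ n : ℕ, 0 < n ∧ ∀ i ∈ B j, η i ^ n = 1 := by
    intro j
    choose N hN using hη
    refine ⟨∏ i ∈ B j, N i, Finset.prod_pos (fun i _ => (hN i).1), ?_⟩
    intro i hi
    obtain ⟨c, hc⟩ := Finset.dvd_prod_of_mem N hi
    rw [hc, pow_mul, (hN i).2, one_pow]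
  have hcore : ∀ j : Fin u, ∃ ζ : ℂ, IsRootOfUnity ζ ∧ ∀ i ∈ B j,
      ∃ Nn : ℕ, 0 < Nn ∧ (η i * ζ⁻¹) ^ Nn = 1 ∧ ∀ q : ℕ, q.Prime → q ∣ Nn → q ≤ (B j).card := by
    intro j
    obtain ⟨n, hn, hnpow⟩ := hexp j
    obtain ⟨ζ, hζ, hζspec⟩ := mann_core k a (B j) n hn η hnpow (hBsum j) (hBmin j)
    exact ⟨ζ, ⟨n, hn, hζ⟩, hζspec⟩
  choose ζ hζroot hζspec using hcore
  choose jOf hjOf using hcov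
  have hζne : ∀ j, ζ j ≠ 0 := by
    intro j h0
    obtain ⟨n, hn, h1⟩ := hζroot j
    rw [h0, zero_pow hn.ne'] at h1
    exact zero_ne_one h1
  have hjuniq : ∀ j, ∀ i ∈ B j, jOf i = j := by
    intro j i hi
    by_contra hne
    exact (Finset.disjoint_left.mp (hdisj _ _ hne) (hjOf i)) hi
  set ν : Fin k → ℂ := fun i => η i * (ζ (jOf i))⁻¹ with hν
  refine ⟨u, B, ζ, ν, hBne, hdisj, ?_, hζroot, ?_, ?_, ?_, ?_, ?_⟩
  · ext x
    simp only [Finset.mem_biUnion, Finset.mem_univ, iff_true]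
    exact ⟨jOf x, trivial, hjOf x⟩
  · intro i
    obtain ⟨Nn, h1, h2, h3⟩ := hζspec (jOf i) i (hjOf i)
    exact ⟨Nn, h1, h2⟩
  · intro j i hi
    show η i = ζ j * (η i * (ζ (jOf i))⁻¹)
    rw [hjuniq j i hi, mul_comm (ζ j), mul_assoc, inv_mul_cancel₀ (hζne j), mul_one]
  · intro j
    have h1 : ∀ i ∈ B j, (a i : ℂ) * ν i = ((a i : ℂ) * η i) * (ζ j)⁻¹ := by
      intro i hi
      show (a i : ℂ) * (η i * (ζ (jOf i))⁻¹) = ((a i : ℂ) * η i) * (ζ j)⁻¹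
      rw [hjuniq j i hi]; ring
    rw [Finset.sum_congr rfl h1, ← Finset.sum_mul, hBsum j, zero_mul]
  · intro j S' hS' hS'ne hS'neq hcon
    apply hBmin j S' hS' hS'ne hS'neq
    have h1 : ∀ i ∈ S', (a i : ℂ) * ν i = ((a i : ℂ) * η i) * (ζ j)⁻¹ := by
      intro i hi
      show (a i : ℂ) * (η i * (ζ (jOf i))⁻¹) = ((a i : ℂ) * η i) * (ζ j)⁻¹
      rw [hjuniq j i (hS' hi)]; ring
    rw [Finset.sum_congr rfl h1, ← Finset.sum_mul] at hcon
    exact (mul_eq_zero.mp hcon).resolve_right (inv_ne_zero (hζne j))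
  · intro i
    obtain ⟨Nn, h1, h2, h3⟩ := hζspec (jOf i) i (hjOf i)
    exact ⟨Nn, h1, h2, fun p hp hpd => ⟨jOf i, h3 p hp hpd⟩⟩
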